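/- Fix 0 < α < 1 and β > 0. Let λ = (λ₁,…,λₙ) and μ = (μ₁,…,μₙ) be vectors of positive reals such that λ is majorized by μ. Then for every x > 0, ∏_{k=1}^{n} [1 - (1 - e^{λ_k(1-e^{x^β})})^α] ≤ ∏_{k=1}^{n} [1 - (1 - e^{μ_k(1-e^{x^β})})^α]. (In other words, if Xᵢ are independent with Exponentiated Chen distribution F(x;α,β,λᵢ) and Yᵢ are independent with distribution F(x;α,β,μᵢ), then X_{1:n} ≤_st Y_{1:n}: the survival function of the minimum of the X's is pointwise at most that of the minimum of the Y's.) -/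

import Mathlib

/-- The increasing rearrangement of a finite tuple of reals. -/
noncomputable def sortedAsc {n : ℕ} (a : Fin n → ℝ) : Fin n → ℝ :=
  a ∘ Tuple.sort a

/-- `a` is majorized by `b`: the total sums agree and every prefix sum of the
increasing rearrangement of `a` is at least the corresponding prefix sum for `b`. -/
noncomputable def MajorizedBy {n : ℕ} (a b : Fin n → ℝ) : Prop :=
  (∑ i, a i = ∑ i, b i) ∧
    ∀ k : ℕ, 1 ≤ k → k ≤ n - 1 →
      ∑ i ∈ Finset.univ.filter (fun i : Fin n => (i : ℕ) < k), sortedAsc a i ≥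
        ∑ i ∈ Finset.univ.filter (fun i : Fin n => (i : ℕ) < k), sortedAsc b i

open Real Set Finset

section derivs
variable {α t : ℝ}

lemma ec_basic (hα0 : 0 < α) (ht : t < 0) {l : ℝ} (hl : 0 < l) :
    0 < Real.exp (l * t) ∧ Real.exp (l * t) < 1 ∧ 0 < 1 - Real.exp (l * t) ∧
      1 - Real.exp (l * t) < 1 ∧ 0 < (1 - Real.exp (l * t)) ^ α ∧
      (1 - Real.exp (l * t)) ^ α < 1 := by
  have hlt : l * t < 0 := mul_neg_of_pos_of_neg hl ht
  have he0 : 0 < Real.exp (l * t) := Real.exp_pos _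
  have he1 : Real.exp (l * t) < 1 := by
    have := Real.exp_lt_exp.mpr hlt
    simpa using this
  have hw0 : 0 < 1 - Real.exp (l * t) := by linarith
  have hw1 : 1 - Real.exp (l * t) < 1 := by linarith
  exact ⟨he0, he1, hw0, hw1, Real.rpow_pos_of_pos hw0 α, Real.rpow_lt_one hw0.le hw1 hα0⟩

lemma ec_hasDerivAt_f (hα0 : 0 < α) (ht : t < 0) {l : ℝ} (hl : 0 < l) :
    HasDerivAt (fun l => Real.log (1 - (1 - Real.exp (l * t)) ^ α))
      (α * (1 - Real.exp (l * t)) ^ (α - 1) * (Real.exp (l * t) * t) /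
        (1 - (1 - Real.exp (l * t)) ^ α)) l := by
  obtain ⟨he0, he1, hw0, hw1, hA0, hA1⟩ := ec_basic hα0 ht hl
  have h1 : HasDerivAt (fun l : ℝ => l * t) t l := hasDerivAt_mul_const t
  have h2 : HasDerivAt (fun l : ℝ => Real.exp (l * t)) (Real.exp (l * t) * t) l :=
    by have h := (Real.hasDerivAt_exp (l * t)).comp l h1; exact h
  have h3 : HasDerivAt (fun l : ℝ => 1 - Real.exp (l * t)) (-(Real.exp (l * t) * t)) l :=
    h2.const_sub 1
  have h4 : HasDerivAt (fun w : ℝ => w ^ α) (α * (1 - Real.exp (l * t)) ^ (α - 1))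
      (1 - Real.exp (l * t)) := Real.hasDerivAt_rpow_const (Or.inl hw0.ne')
  have h5 : HasDerivAt (fun l : ℝ => (1 - Real.exp (l * t)) ^ α)
      (α * (1 - Real.exp (l * t)) ^ (α - 1) * -(Real.exp (l * t) * t)) l := by have h := h4.comp l h3; exact h
  have h6 : HasDerivAt (fun l : ℝ => 1 - (1 - Real.exp (l * t)) ^ α)
      (α * (1 - Real.exp (l * t)) ^ (α - 1) * (Real.exp (l * t) * t)) l := by
    have := h5.const_sub 1
    refine this.congr_deriv ?_
    ring
  have hG0 : 0 < 1 - (1 - Real.exp (l * t)) ^ α := by linarith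
  have h7 := (Real.hasDerivAt_log hG0.ne').comp l h6
  refine h7.congr_deriv ?_
  field_simp

lemma ec_hasDerivAt_f1 (hα0 : 0 < α) (hα1 : α < 1) (ht : t < 0) {l : ℝ} (hl : 0 < l) :
    ∃ E : ℝ, 0 ≤ E ∧
      HasDerivAt (fun l => α * (1 - Real.exp (l * t)) ^ (α - 1) * (Real.exp (l * t) * t) /
        (1 - (1 - Real.exp (l * t)) ^ α)) E l := by
  obtain ⟨he0, he1, hw0, hw1, hA0, hA1⟩ := ec_basic hα0 ht hl
  set e := Real.exp (l * t) with he_def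
  set w := 1 - e with hw_def
  set A := w ^ α with hA_def
  have hG0 : 0 < 1 - A := by linarith
  have h1 : HasDerivAt (fun l : ℝ => l * t) t l := hasDerivAt_mul_const t
  have h2 : HasDerivAt (fun l : ℝ => Real.exp (l * t)) (e * t) l :=
    by have h := (Real.hasDerivAt_exp (l * t)).comp l h1; exact h
  have h3 : HasDerivAt (fun l : ℝ => 1 - Real.exp (l * t)) (-(e * t)) l := h2.const_sub 1
  -- numerator pieces
  have hn1 : HasDerivAt (fun l : ℝ => (1 - Real.exp (l * t)) ^ (α - 1))
      ((α - 1) * w ^ (α - 1 - 1) * -(e * t)) l :=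
    by have h := (Real.hasDerivAt_rpow_const (p := α - 1) (Or.inl hw0.ne')).comp l h3; exact h
  have hn2 : HasDerivAt (fun l : ℝ => Real.exp (l * t) * t) (e * t * t) l := h2.mul_const t
  have hn3 : HasDerivAt (fun l : ℝ => (1 - Real.exp (l * t)) ^ (α - 1) * (Real.exp (l * t) * t))
      ((α - 1) * w ^ (α - 1 - 1) * -(e * t) * (e * t) + w ^ (α - 1) * (e * t * t)) l :=
    hn1.mul hn2
  have hnum : HasDerivAt (fun l : ℝ => α * ((1 - Real.exp (l * t)) ^ (α - 1) * (Real.exp (l * t) * t)))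
      (α * ((α - 1) * w ^ (α - 1 - 1) * -(e * t) * (e * t) + w ^ (α - 1) * (e * t * t))) l :=
    hn3.const_mul α
  have hden : HasDerivAt (fun l : ℝ => 1 - (1 - Real.exp (l * t)) ^ α)
      (α * w ^ (α - 1) * (e * t)) l := by
    have h5 : HasDerivAt (fun l : ℝ => (1 - Real.exp (l * t)) ^ α)
        (α * w ^ (α - 1) * -(e * t)) l :=
      by have h := (Real.hasDerivAt_rpow_const (p := α) (Or.inl hw0.ne')).comp l h3; exact h
    have := h5.const_sub 1
    refine this.congr_deriv ?_
    ring
  have hdiv := hnum.div hden hG0.ne'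
  have hfun : (fun y : ℝ => α * ((1 - Real.exp (y * t)) ^ (α - 1) * (Real.exp (y * t) * t)) /
      (1 - (1 - Real.exp (y * t)) ^ α))
      = (fun y : ℝ => α * (1 - Real.exp (y * t)) ^ (α - 1) * (Real.exp (y * t) * t) /
        (1 - (1 - Real.exp (y * t)) ^ α)) := by
    funext y; ring
  simp only [Pi.div_def] at hdiv
  rw [hfun] at hdiv
  refine ⟨_, ?_, hdiv⟩
  simp only [← he_def, ← hw_def, ← hA_def]
  have hw1' : w ^ (α - 1) = A / w := by
    rw [hA_def, Real.rpow_sub hw0, Real.rpow_one]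
  have hw2' : w ^ (α - 1 - 1) = A / (w * w) := by
    rw [hA_def, Real.rpow_sub hw0, Real.rpow_sub hw0, Real.rpow_one, div_div]
  have key : A ≤ 1 - α + α * w := by
    have h := rpow_one_add_le_one_add_mul_self (s := w - 1) (by linarith) hα0.le hα1.le
    rw [show (1:ℝ) + (w - 1) = w by ring] at h
    rw [hA_def]; linarith
  rw [hw1', hw2']
  apply div_nonneg _ (sq_nonneg _)
  have hew : e = 1 - w := by rw [hw_def]; ring
  have hkey2 : (0:ℝ) ≤ 1 - α + α * w - A := by linarith
  have hprod : (0:ℝ) ≤ α * A * e * t ^ 2 / (w * w) * (1 - α + α * w - A) :=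
    mul_nonneg (div_nonneg (mul_nonneg (mul_nonneg (mul_nonneg hα0.le hA0.le) he0.le)
      (sq_nonneg t)) (mul_pos hw0 hw0).le) hkey2
  have hid : α * ((α - 1) * (A / (w * w)) * -(e * t) * (e * t) + A / w * (e * t * t)) * (1 - A) -
      α * (A / w * (e * t)) * (α * (A / w) * (e * t))
      = α * A * e * t ^ 2 / (w * w) * (1 - α + α * w - A) := by
    rw [hew]
    field_simp
    ring
  rw [hid]
  exact hprod

lemma ec_convexOn (hα0 : 0 < α) (hα1 : α < 1) (ht : t < 0) :
    ConvexOn ℝ (Set.Ioi 0) (fun l => Real.log (1 - (1 - Real.exp (l * t)) ^ α)) := by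
  set f1 : ℝ → ℝ := fun l => α * (1 - Real.exp (l * t)) ^ (α - 1) * (Real.exp (l * t) * t) /
    (1 - (1 - Real.exp (l * t)) ^ α) with hf1_def
  have hd1 : ∀ l ∈ Set.Ioi (0:ℝ), ∃ E, 0 ≤ E ∧ HasDerivAt f1 E l := fun l hl =>
    ec_hasDerivAt_f1 hα0 hα1 ht hl
  have hmono1 : MonotoneOn f1 (Set.Ioi 0) := by
    apply monotoneOn_of_deriv_nonneg (convex_Ioi 0)
    · intro l hl
      obtain ⟨E, _, hE⟩ := hd1 l hl
      exact hE.differentiableAt.continuousAt.continuousWithinAt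
    · rw [interior_Ioi]
      intro l hl
      obtain ⟨E, _, hE⟩ := hd1 l hl
      exact hE.differentiableAt.differentiableWithinAt
    · rw [interior_Ioi]
      intro l hl
      obtain ⟨E, hE0, hE⟩ := hd1 l hl
      rw [hE.deriv]; exact hE0
  apply MonotoneOn.convexOn_of_deriv (convex_Ioi 0)
  · intro l hl
    exact (ec_hasDerivAt_f hα0 ht hl).differentiableAt.continuousAt.continuousWithinAt
  · rw [interior_Ioi]
    intro l hl
    exact (ec_hasDerivAt_f hα0 ht hl).differentiableAt.differentiableWithinAt
  · rw [interior_Ioi]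
    exact hmono1.congr fun l hl => ((ec_hasDerivAt_f hα0 ht hl).deriv).symm

end derivs

lemma filter_sum_eq {n : ℕ} (g : Fin n → ℝ) :
    ∀ k, k ≤ n → ∑ i ∈ Finset.univ.filter (fun i : Fin n => (i : ℕ) < k), g i
      = ∑ j ∈ Finset.range k, (if h : j < n then g ⟨j, h⟩ else 0) := by
  intro k
  induction k with
  | zero => intro _; simp
  | succ m ih =>
    intro hm
    have hmn : m < n := by omega
    rw [Finset.sum_range_succ, ← ih (by omega), dif_pos hmn]
    have hset : Finset.univ.filter (fun i : Fin n => (i : ℕ) < m + 1)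
        = insert (⟨m, hmn⟩ : Fin n) (Finset.univ.filter (fun i : Fin n => (i : ℕ) < m)) := by
      ext i
      simp only [Finset.mem_filter, Finset.mem_insert, Finset.mem_univ, true_and, Fin.ext_iff]
      omega
    rw [hset, Finset.sum_insert (by simp)]
    ring

lemma hlp_majorization {n : ℕ} (f : ℝ → ℝ) (hconv : ConvexOn ℝ (Set.Ioi 0) f)
    (hdiff : ∀ l ∈ Set.Ioi (0:ℝ), DifferentiableAt ℝ f l)
    (a b : Fin n → ℝ) (ha : ∀ i, 0 < a i) (hb : ∀ i, 0 < b i)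
    (hmaj : MajorizedBy a b) : ∑ i, f (a i) ≤ ∑ i, f (b i) := by
  set A : Fin n → ℝ := sortedAsc a with hA_def
  set B : Fin n → ℝ := sortedAsc b with hB_def
  have hA : ∀ i, 0 < A i := fun i => ha _
  have hB : ∀ i, 0 < B i := fun i => hb _
  have hAmono : Monotone A := Tuple.monotone_sort a
  -- sums under sorting
  have hsa : ∀ g : ℝ → ℝ, ∑ i, g (A i) = ∑ i, g (a i) := fun g =>
    Equiv.sum_comp (Tuple.sort a) (g ∘ a)
  have hsb : ∀ g : ℝ → ℝ, ∑ i, g (B i) = ∑ i, g (b i) := fun g =>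
    Equiv.sum_comp (Tuple.sort b) (g ∘ b)
  rw [← hsa f, ← hsb f]
  -- the slopes
  set s : Fin n → ℝ := fun i => deriv f (A i) with hs_def
  have step1 : ∀ i, s i * (B i - A i) ≤ f (B i) - f (A i) := by
    intro i
    rcases lt_trichotomy (A i) (B i) with h | h | h
    · have h1 := hconv.deriv_le_slope (hA i) (hB i) h (hdiff _ (hA i))
      rw [slope_def_field] at h1
      have h2 : 0 < B i - A i := by linarith
      calc s i * (B i - A i) ≤ (f (B i) - f (A i)) / (B i - A i) * (B i - A i) := by
            exact mul_le_mul_of_nonneg_right h1 h2.le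
        _ = f (B i) - f (A i) := by field_simp
    · rw [h]; simp
    · have h1 := hconv.slope_le_deriv (hB i) (hA i) h (hdiff _ (hA i))
      rw [slope_def_field] at h1
      have h2 : 0 < A i - B i := by linarith
      have := mul_le_mul_of_nonneg_right h1 h2.le
      rw [div_mul_cancel₀ _ h2.ne'] at this
      nlinarith
  have smono : MonotoneOn (deriv f) (Set.Ioi 0) := hconv.monotoneOn_deriv hdiff
  -- move to ℕ-indexed sums
  set dA : ℕ → ℝ := fun j => if h : j < n then A ⟨j, h⟩ else 0 with hdA_def
  set dB : ℕ → ℝ := fun j => if h : j < n then B ⟨j, h⟩ else 0 with hdB_def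
  set sn : ℕ → ℝ := fun j => if h : j < n then s ⟨j, h⟩ else 0 with hsn_def
  set d : ℕ → ℝ := fun j => dB j - dA j with hd_def
  have hT : ∑ j ∈ Finset.range n, d j = 0 := by
    have h1 : ∑ j ∈ Finset.range n, d j = ∑ i : Fin n, (B i - A i) := by
      rw [← Fin.sum_univ_eq_sum_range (fun j => d j) n]
      apply Finset.sum_congr rfl
      intro i _
      simp [hd_def, hdA_def, hdB_def, i.isLt]
    rw [h1, Finset.sum_sub_distrib]
    have h2 := hsa id
    have h3 := hsb id
    simp only [id_eq] at h2 h3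
    have hab := hmaj.1
    linarith
  -- prefix sums are nonpositive
  have hP : ∀ k, 1 ≤ k → k ≤ n - 1 → ∑ j ∈ Finset.range k, d j ≤ 0 := by
    intro k hk1 hk2
    have hkn : k ≤ n := by omega
    have h1 : ∑ j ∈ Finset.range k, dA j
        = ∑ i ∈ Finset.univ.filter (fun i : Fin n => (i : ℕ) < k), A i :=
      (filter_sum_eq A k hkn).symm
    have h2 : ∑ j ∈ Finset.range k, dB j
        = ∑ i ∈ Finset.univ.filter (fun i : Fin n => (i : ℕ) < k), B i :=
      (filter_sum_eq B k hkn).symm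
    have hm := hmaj.2 k hk1 hk2
    have hsum : ∑ j ∈ Finset.range k, d j
        = ∑ j ∈ Finset.range k, dB j - ∑ j ∈ Finset.range k, dA j :=
      Finset.sum_sub_distrib _ _
    rw [hsum, h1, h2]
    rw [hA_def] at *
    rw [hB_def] at *
    linarith [hm]
  -- monotonicity of sn below n
  have hsnmono : ∀ i : ℕ, i + 1 < n → sn i ≤ sn (i + 1) := by
    intro i hi
    have hi' : i < n := by omega
    rw [hsn_def]
    simp only [dif_pos hi, dif_pos hi']
    apply smono (hA _) (hA _)
    exact hAmono (by simp [Fin.mk_le_mk])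
  -- Abel summation
  have habel := Finset.sum_range_by_parts sn d n
  have hterm : ∑ i ∈ Finset.range (n - 1), (sn (i + 1) - sn i) • (∑ j ∈ Finset.range (i + 1), d j) ≤ 0 := by
    apply Finset.sum_nonpos
    intro i hi
    rw [Finset.mem_range] at hi
    rw [smul_eq_mul]
    apply mul_nonpos_of_nonneg_of_nonpos
    · have := hsnmono i (by omega)
      linarith
    · exact hP (i + 1) (by omega) (by omega)
  have hmain : 0 ≤ ∑ j ∈ Finset.range n, sn j * d j := by
    have : ∑ j ∈ Finset.range n, sn j • d j
        = sn (n - 1) • (∑ j ∈ Finset.range n, d j)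
          - ∑ i ∈ Finset.range (n - 1), (sn (i + 1) - sn i) • (∑ j ∈ Finset.range (i + 1), d j) :=
      habel
    simp only [smul_eq_mul] at this hterm
    rw [this, hT, mul_zero]
    linarith
  -- convert back to Fin sums
  have hfin : ∑ j ∈ Finset.range n, sn j * d j = ∑ i : Fin n, s i * (B i - A i) := by
    rw [← Fin.sum_univ_eq_sum_range (fun j => sn j * d j) n]
    apply Finset.sum_congr rfl
    intro i _
    simp [hsn_def, hd_def, hdA_def, hdB_def, i.isLt]
  have := Finset.sum_le_sum (fun i (_ : i ∈ Finset.univ) => step1 i)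
  rw [Finset.sum_sub_distrib] at this
  rw [hfin] at hmain
  linarith

/-- Theorem 1 (case `0 < α < 1`): if `λ ≺ᵐ μ`, then the survival function of the
series system with Exponentiated Chen components `F(x; α, β, λᵢ)` is pointwise at most
that of the series system with components `F(x; α, β, μᵢ)`, i.e. `X_{1:n} ≤_st Y_{1:n}`. -/
theorem series_st_order_lambda_alpha_lt_one (α β : ℝ) (hα0 : 0 < α) (hα1 : α < 1)
    (hβ : 0 < β) {n : ℕ} (lam mu : Fin n → ℝ)
    (hlam : ∀ i, 0 < lam i) (hmu : ∀ i, 0 < mu i) (hmaj : MajorizedBy lam mu) :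
    ∀ x : ℝ, 0 < x →
      ∏ k, (1 - (1 - Real.exp (lam k * (1 - Real.exp (x ^ β)))) ^ α) ≤
        ∏ k, (1 - (1 - Real.exp (mu k * (1 - Real.exp (x ^ β)))) ^ α) := by
  intro x hx
  have hxb : 0 < x ^ β := Real.rpow_pos_of_pos hx β
  have ht : 1 - Real.exp (x ^ β) < 0 := by
    have h1 : (1:ℝ) < Real.exp (x ^ β) := by
      rw [← Real.exp_zero]
      exact Real.exp_lt_exp.mpr hxb
    linarith
  set t := 1 - Real.exp (x ^ β) with ht_def
  have hfact : ∀ l : ℝ, 0 < l → 0 < 1 - (1 - Real.exp (l * t)) ^ α := by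
    intro l hl
    obtain ⟨_, _, _, _, _, h6⟩ := ec_basic hα0 ht hl
    linarith
  have hrw : ∀ v : Fin n → ℝ, (∀ i, 0 < v i) →
      ∏ k, (1 - (1 - Real.exp (v k * t)) ^ α)
        = Real.exp (∑ k, Real.log (1 - (1 - Real.exp (v k * t)) ^ α)) := by
    intro v hv
    rw [Real.exp_sum]
    exact Finset.prod_congr rfl fun k _ => (Real.exp_log (hfact _ (hv k))).symm
  rw [hrw lam hlam, hrw mu hmu, Real.exp_le_exp]
  exact hlp_majorization (fun l => Real.log (1 - (1 - Real.exp (l * t)) ^ α))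
    (ec_convexOn hα0 hα1 ht)
    (fun l hl => (ec_hasDerivAt_f hα0 ht hl).differentiableAt) lam mu hlam hmu hmaj
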